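/- Let K, M, N, d be natural numbers with d ≤ M and d ≤ N − 1 (so that both systems below satisfy the antenna constraints d ≤ min(M, N) and d ≤ min(M + 1, N − 1)). Then the symmetric system (M × N, d)^K is proper if and only if the symmetric system ((M + 1) × (N − 1), d)^K is proper. In particular, transferring one antenna from each receiver to its corresponding transmitter (or vice versa) preserves the proper/improper status of a symmetric system, as long as every node retains at least d antennas. -/

import Mathlib

/-- The set of variables of a `K`-user MIMO interference alignment system:
transmit-beamformer coordinates `(j, n, i)` with `n : Fin (d j)`, `i : Fin (M j - d j)`,
together with receive-filter coordinates `(k, m, i)` with `m : Fin (d k)`,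
`i : Fin (N k - d k)`. -/
abbrev IAVar (K : ℕ) (M N d : Fin K → ℕ) : Type :=
  (Σ j : Fin K, Fin (d j) × Fin (M j - d j)) ⊕ (Σ k : Fin K, Fin (d k) × Fin (N k - d k))

/-- The set of interference alignment equations `(k, j, m, n)` with `k ≠ j`,
`m : Fin (d k)`, `n : Fin (d j)`. -/
abbrev IAEqs (K : ℕ) (d : Fin K → ℕ) : Type :=
  {p : Σ k : Fin K, Σ j : Fin K, Fin (d k) × Fin (d j) // p.1 ≠ p.2.1}

/-- The set of variables involved in the equation `(k, j, m, n)`: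
all transmit variables `inl (j, n, i)` and all receive variables `inr (k, m, i)`. -/
def iaVar {K : ℕ} (M N d : Fin K → ℕ) (e : IAEqs K d) : Finset (IAVar K M N d) :=
  (Finset.univ.image fun i : Fin (M e.1.2.1 - d e.1.2.1) =>
      Sum.inl ⟨e.1.2.1, (e.1.2.2.2, i)⟩)
  ∪ (Finset.univ.image fun i : Fin (N e.1.1 - d e.1.1) =>
      Sum.inr ⟨e.1.1, (e.1.2.2.1, i)⟩)

/-- A system is proper if every subset of equations involves at least as many
variables as equations. -/
def IsProper (K : ℕ) (M N d : Fin K → ℕ) : Prop :=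
  ∀ S : Finset (IAEqs K d), S.card ≤ (S.biUnion (iaVar M N d)).card

section Symm

variable {K M N d : ℕ}

/-- transmit pair of an equation -/
def txp (e : IAEqs K (fun _ => d)) : Fin K × Fin d := (e.1.2.1, e.1.2.2.2)

/-- receive pair of an equation -/
def rxp (e : IAEqs K (fun _ => d)) : Fin K × Fin d := (e.1.1, e.1.2.2.1)

def txSet (M N : ℕ) (p : Fin K × Fin d) :
    Finset (IAVar K (fun _ => M) (fun _ => N) (fun _ => d)) :=
  Finset.univ.image fun i : Fin (M - d) => Sum.inl ⟨p.1, (p.2, i)⟩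

def rxSet (M N : ℕ) (p : Fin K × Fin d) :
    Finset (IAVar K (fun _ => M) (fun _ => N) (fun _ => d)) :=
  Finset.univ.image fun i : Fin (N - d) => Sum.inr ⟨p.1, (p.2, i)⟩

lemma iaVar_eq (e : IAEqs K (fun _ => d)) :
    iaVar (fun _ => M) (fun _ => N) (fun _ => d) e =
      txSet M N (txp e) ∪ rxSet M N (rxp e) := rfl

lemma txSet_card (p : Fin K × Fin d) : (txSet (K := K) M N p).card = M - d := by
  rw [txSet, Finset.card_image_of_injective _ (fun i j h => by simpa using h)]
  simp

lemma rxSet_card (p : Fin K × Fin d) : (rxSet (K := K) M N p).card = N - d := by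
  rw [rxSet, Finset.card_image_of_injective _ (fun i j h => by simpa using h)]
  simp

lemma biUnion_card (S : Finset (IAEqs K (fun _ => d))) :
    (S.biUnion (iaVar (fun _ => M) (fun _ => N) (fun _ => d))).card =
      (S.image txp).card * (M - d) + (S.image rxp).card * (N - d) := by
  have h1 : S.biUnion (iaVar (fun _ => M) (fun _ => N) (fun _ => d)) =
      ((S.image txp).biUnion (txSet M N)) ∪ ((S.image rxp).biUnion (rxSet M N)) := by
    ext x
    simp only [Finset.mem_biUnion, Finset.mem_union, Finset.mem_image, iaVar_eq]
    constructor
    · rintro ⟨e, he, hx | hx⟩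
      · exact Or.inl ⟨_, ⟨e, he, rfl⟩, hx⟩
      · exact Or.inr ⟨_, ⟨e, he, rfl⟩, hx⟩
    · rintro (⟨p, ⟨e, he, rfl⟩, hx⟩ | ⟨p, ⟨e, he, rfl⟩, hx⟩)
      · exact ⟨e, he, Or.inl hx⟩
      · exact ⟨e, he, Or.inr hx⟩
  rw [h1, Finset.card_union_of_disjoint, Finset.card_biUnion, Finset.card_biUnion]
  · simp [txSet_card, rxSet_card, Finset.sum_const, mul_comm]
  · -- rxSets pairwise disjoint
    intro p _ q _ hpq
    rw [Function.onFun, Finset.disjoint_left]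
    rintro x hx hx'
    simp only [rxSet, Finset.mem_image, Finset.mem_univ, true_and] at hx hx'
    obtain ⟨i, rfl⟩ := hx
    obtain ⟨i', hi'⟩ := hx'
    apply hpq
    have := (Sum.inr.inj hi')
    rw [Sigma.mk.inj_iff] at this
    obtain ⟨h1, h2⟩ := this
    have h2' := eq_of_heq h2
    exact Prod.ext h1.symm (congrArg Prod.fst h2'.symm)
  · intro p _ q _ hpq
    rw [Function.onFun, Finset.disjoint_left]
    rintro x hx hx'
    simp only [txSet, Finset.mem_image, Finset.mem_univ, true_and] at hx hx'
    obtain ⟨i, rfl⟩ := hx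
    obtain ⟨i', hi'⟩ := hx'
    apply hpq
    have := (Sum.inl.inj hi')
    rw [Sigma.mk.inj_iff] at this
    obtain ⟨h1, h2⟩ := this
    have h2' := eq_of_heq h2
    exact Prod.ext h1.symm (congrArg Prod.fst h2'.symm)
  · -- inl vs inr disjoint
    rw [Finset.disjoint_left]
    rintro x hx hx'
    simp only [Finset.mem_biUnion, txSet, rxSet, Finset.mem_image, Finset.mem_univ,
      true_and] at hx hx'
    obtain ⟨p, _, i, rfl⟩ := hx
    obtain ⟨q, _, i', h⟩ := hx'
    exact absurd h (by simp)

end Symm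

section Count

variable {K M N d : ℕ}

lemma fiber_card_le (S : Finset (IAEqs K (fun _ => d))) (x : Fin K × Fin d) :
    (S.filter fun e => rxp e = x).card ≤ (K - 1) * d := by
  have hsub : ∀ e ∈ S.filter fun e => rxp e = x,
      txp e ∈ (Finset.univ.erase x.1) ×ˢ (Finset.univ : Finset (Fin d)) := by
    intro e he
    rw [Finset.mem_filter] at he
    simp only [Finset.mem_product, Finset.mem_erase, Finset.mem_univ, and_true]
    have : e.1.1 = x.1 := congrArg Prod.fst he.2
    exact fun h => e.2 (this ▸ h.symm) |>.elim
  calc (S.filter fun e => rxp e = x).card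
      ≤ ((Finset.univ.erase x.1) ×ˢ (Finset.univ : Finset (Fin d))).card := by
        apply Finset.card_le_card_of_injOn txp hsub
        intro e₁ h₁ e₂ h₂ ht
        rw [Finset.coe_filter, Set.mem_setOf_eq] at h₁ h₂
        have hr : rxp e₁ = rxp e₂ := h₁.2.trans h₂.2.symm
        obtain ⟨⟨k₁, j₁, m₁, n₁⟩, hne₁⟩ := e₁
        obtain ⟨⟨k₂, j₂, m₂, n₂⟩, hne₂⟩ := e₂
        simp only [txp, rxp, Prod.mk.injEq] at ht hr
        obtain ⟨h1, h2⟩ := ht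
        obtain ⟨h3, h4⟩ := hr
        subst h1; subst h3
        simp_all
    _ = (K - 1) * d := by
        rw [Finset.card_product, Finset.card_erase_of_mem (Finset.mem_univ _)]
        simp

lemma fiber_card_le' (S : Finset (IAEqs K (fun _ => d))) (x : Fin K × Fin d) :
    (S.filter fun e => txp e = x).card ≤ (K - 1) * d := by
  have hsub : ∀ e ∈ S.filter fun e => txp e = x,
      rxp e ∈ (Finset.univ.erase x.1) ×ˢ (Finset.univ : Finset (Fin d)) := by
    intro e he
    rw [Finset.mem_filter] at he
    simp only [Finset.mem_product, Finset.mem_erase, Finset.mem_univ, and_true]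
    have : e.1.2.1 = x.1 := congrArg Prod.fst he.2
    exact fun h => e.2 (h.trans this.symm) |>.elim
  calc (S.filter fun e => txp e = x).card
      ≤ ((Finset.univ.erase x.1) ×ˢ (Finset.univ : Finset (Fin d))).card := by
        apply Finset.card_le_card_of_injOn rxp hsub
        intro e₁ h₁ e₂ h₂ hr
        rw [Finset.coe_filter, Set.mem_setOf_eq] at h₁ h₂
        have ht : txp e₁ = txp e₂ := h₁.2.trans h₂.2.symm
        obtain ⟨⟨k₁, j₁, m₁, n₁⟩, hne₁⟩ := e₁
        obtain ⟨⟨k₂, j₂, m₂, n₂⟩, hne₂⟩ := e₂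
        simp only [txp, rxp, Prod.mk.injEq] at ht hr
        obtain ⟨h1, h2⟩ := ht
        obtain ⟨h3, h4⟩ := hr
        subst h1; subst h3
        simp_all
    _ = (K - 1) * d := by
        rw [Finset.card_product, Finset.card_erase_of_mem (Finset.mem_univ _)]
        simp

lemma card_le_rx (S : Finset (IAEqs K (fun _ => d))) :
    S.card ≤ (S.image rxp).card * ((K - 1) * d) := by
  rw [Finset.card_eq_sum_card_fiberwise (f := rxp) (t := S.image rxp)
    (fun e he => Finset.mem_image_of_mem _ he)]
  exact Finset.sum_le_card_nsmul _ _ _ (fun x _ => fiber_card_le S x)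

lemma card_le_tx (S : Finset (IAEqs K (fun _ => d))) :
    S.card ≤ (S.image txp).card * ((K - 1) * d) := by
  rw [Finset.card_eq_sum_card_fiberwise (f := txp) (t := S.image txp)
    (fun e he => Finset.mem_image_of_mem _ he)]
  exact Finset.sum_le_card_nsmul _ _ _ (fun x _ => fiber_card_le' S x)

end Count

section Main

variable {K M N d : ℕ}

lemma proper_of_ineq (h : (K - 1) * d ≤ (M - d) + (N - d)) :
    IsProper K (fun _ => M) (fun _ => N) (fun _ => d) := by
  intro S
  rw [biUnion_card]
  set T := S.image txp
  set R := S.image rxp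
  rcases le_total R.card T.card with hle | hle
  · calc S.card ≤ R.card * ((K - 1) * d) := card_le_rx S
      _ ≤ R.card * ((M - d) + (N - d)) := Nat.mul_le_mul_left _ h
      _ = R.card * (M - d) + R.card * (N - d) := Nat.mul_add _ _ _
      _ ≤ T.card * (M - d) + R.card * (N - d) :=
          Nat.add_le_add_right (Nat.mul_le_mul_right _ hle) _
  · calc S.card ≤ T.card * ((K - 1) * d) := card_le_tx S
      _ ≤ T.card * ((M - d) + (N - d)) := Nat.mul_le_mul_left _ h
      _ = T.card * (M - d) + T.card * (N - d) := Nat.mul_add _ _ _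
      _ ≤ T.card * (M - d) + R.card * (N - d) :=
          Nat.add_le_add_left (Nat.mul_le_mul_right _ hle) _

def eqsEquiv (K d : ℕ) :
    IAEqs K (fun _ => d) ≃ {p : Fin K × Fin K // p.1 ≠ p.2} × (Fin d × Fin d) where
  toFun e := (⟨(e.1.1, e.1.2.1), e.2⟩, (e.1.2.2.1, e.1.2.2.2))
  invFun x := ⟨⟨x.1.1.1, x.1.1.2, (x.2.1, x.2.2)⟩, x.1.2⟩
  left_inv e := rfl
  right_inv x := rfl

def diagEquiv (α : Type*) : α ≃ {p : α × α // p.1 = p.2} where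
  toFun a := ⟨(a, a), rfl⟩
  invFun p := p.1.1
  left_inv a := rfl
  right_inv p := by obtain ⟨⟨a, b⟩, h⟩ := p; cases h; rfl

lemma card_eqs (K d : ℕ) :
    Fintype.card (IAEqs K (fun _ => d)) = (K * K - K) * (d * d) := by
  rw [Fintype.card_congr (eqsEquiv K d), Fintype.card_prod, Fintype.card_prod,
    Fintype.card_fin]
  congr 1
  have h2 : Fintype.card {p : Fin K × Fin K // p.1 = p.2} = K := by
    rw [← Fintype.card_congr (diagEquiv (Fin K)), Fintype.card_fin]
  have := Fintype.card_subtype_compl (fun p : Fin K × Fin K => p.1 = p.2)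
  simp only [Fintype.card_prod, Fintype.card_fin, h2] at this
  exact this

lemma ineq_of_proper (hK : 2 ≤ K) (hd : 1 ≤ d)
    (h : IsProper K (fun _ => M) (fun _ => N) (fun _ => d)) :
    (K - 1) * d ≤ (M - d) + (N - d) := by
  haveI : Nontrivial (Fin K) := Fin.nontrivial_iff_two_le.mpr hK
  have hsurj_tx : Function.Surjective (txp (K := K) (d := d)) := by
    intro p
    obtain ⟨k, hk⟩ := exists_ne p.1
    exact ⟨⟨⟨k, p.1, (⟨0, hd⟩, p.2)⟩, hk⟩, rfl⟩
  have hsurj_rx : Function.Surjective (rxp (K := K) (d := d)) := by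
    intro p
    obtain ⟨j, hj⟩ := exists_ne p.1
    exact ⟨⟨⟨p.1, j, (p.2, ⟨0, hd⟩)⟩, hj.symm⟩, rfl⟩
  have := h Finset.univ
  rw [biUnion_card, Finset.image_univ_of_surjective hsurj_tx,
    Finset.image_univ_of_surjective hsurj_rx, Finset.card_univ, Finset.card_univ,
    Fintype.card_prod, Fintype.card_fin, Fintype.card_fin, card_eqs] at this
  have hfact : (K * K - K) * (d * d) = (K * d) * ((K - 1) * d) := by
    have : K * K - K = K * (K - 1) := by
      rw [Nat.mul_sub, Nat.mul_one]
    rw [this]; ring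
  rw [hfact, ← Nat.mul_add] at this
  have hpos : 0 < K * d := Nat.mul_pos (by omega) hd
  exact Nat.le_of_mul_le_mul_left this hpos

lemma eqs_isEmpty (h : K < 2 ∨ d = 0) : IsEmpty (IAEqs K (fun _ => d)) := by
  constructor
  rintro ⟨⟨k, j, m, n⟩, hne⟩
  rcases h with h | h
  · interval_cases K
    · exact k.elim0
    · exact hne (Subsingleton.elim k j)
  · subst h; exact m.elim0

lemma symm_proper_iff (hM : d ≤ M) (hN : d ≤ N) :
    IsProper K (fun _ => M) (fun _ => N) (fun _ => d) ↔
      (2 ≤ K → 1 ≤ d → (K - 1) * d ≤ (M - d) + (N - d)) := by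
  constructor
  · exact fun h hK hd => ineq_of_proper hK hd h
  · intro h
    by_cases hK : 2 ≤ K
    · by_cases hd : 1 ≤ d
      · exact proper_of_ineq (h hK hd)
      · haveI := eqs_isEmpty (K := K) (d := d) (Or.inr (by omega))
        intro S
        simp [Finset.eq_empty_of_isEmpty S]
    · haveI := eqs_isEmpty (K := K) (d := d) (Or.inl (by omega))
      intro S
      simp [Finset.eq_empty_of_isEmpty S]

end Main

/-- **Corollary 2 of the paper.** Transferring one antenna from each receiver to its
corresponding transmitter preserves the proper/improper status of a symmetric system,
as long as every node retains at least `d` antennas: if `d ≤ M` and `d ≤ N - 1`, then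
`(M × N, d)^K` is proper iff `((M + 1) × (N - 1), d)^K` is proper. -/
theorem symmetric_proper_antenna_transfer (K M N d : ℕ) (hdM : d ≤ M) (hdN : d ≤ N - 1) :
    IsProper K (fun _ => M) (fun _ => N) (fun _ => d) ↔
      IsProper K (fun _ => M + 1) (fun _ => N - 1) (fun _ => d) := by
  rw [symm_proper_iff hdM (hdN.trans (Nat.sub_le N 1)),
    symm_proper_iff (hdM.trans (Nat.le_succ M)) hdN]
  constructor <;> intro h hK hd <;> have key := h hK hd <;>
    have heq : (M + 1 - d) + (N - 1 - d) = (M - d) + (N - d) := by omega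
  · omega
  · omega
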